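/- Let f: ℝ^d → ℝ be differentiable with L-Lipschitz gradient, attaining its infimum, and satisfying the Polyak-Łojasiewicz condition ‖∇f(w)‖² ≥ c(f(w) - inf f) for all w with some c > 0. Then gradient descent with step size 1/L satisfies f(w_n) - inf f ≤ (1 - c/(2L))^n (f(w_0) - inf f). -/

import Mathlib

open RealInnerProductSpace intervalIntegral

variable {d : ℕ}

lemma descent (f : EuclideanSpace ℝ (Fin d) → ℝ) (L : ℝ) (hL : 0 < L)
    (hdiff : Differentiable ℝ f) (hlip : LipschitzWith (Real.toNNReal L) (gradient f))
    (x y : EuclideanSpace ℝ (Fin d)) :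
    f y ≤ f x + ⟪gradient f x, y - x⟫ + L / 2 * ‖y - x‖ ^ 2 := by
  set v := y - x with hv
  have hc : ∀ t : ℝ, HasDerivAt (fun t : ℝ => x + t • v) v t := by
    intro t
    simpa using ((hasDerivAt_id t).smul_const v).const_add x
  have hh : ∀ t : ℝ, HasDerivAt (fun t : ℝ => f (x + t • v))
      ⟪gradient f (x + t • v), v⟫ t := by
    intro t
    have := ((hdiff (x + t • v)).hasGradientAt.hasFDerivAt).comp_hasDerivAt t (hc t)
    refine this.congr_deriv ?_
    simp
  have hcontg : Continuous (gradient f) := hlip.continuous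
  have hcont : Continuous fun t : ℝ => ⟪gradient f (x + t • v), v⟫ := by
    exact (hcontg.comp (by continuity)).inner continuous_const
  have hint : f (x + (1:ℝ) • v) - f (x + (0:ℝ) • v) =
      ∫ t in (0:ℝ)..1, ⟪gradient f (x + t • v), v⟫ := by
    exact (intervalIntegral.integral_eq_sub_of_hasDerivAt (fun t _ => hh t)
      (hcont.intervalIntegrable 0 1)).symm
  simp only [one_smul, zero_smul, add_zero] at hint
  have hy : x + v = y := by rw [hv]; abel
  rw [hy] at hint
  have hbound : ∀ t ∈ Set.Icc (0:ℝ) 1,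
      ⟪gradient f (x + t • v), v⟫ ≤ ⟪gradient f x, v⟫ + L * t * ‖v‖ ^ 2 := by
    intro t ht
    have h1 : ⟪gradient f (x + t • v), v⟫ - ⟪gradient f x, v⟫
        = ⟪gradient f (x + t • v) - gradient f x, v⟫ := by
      rw [inner_sub_left]
    have h2 : ‖gradient f (x + t • v) - gradient f x‖ ≤ L * (t * ‖v‖) := by
      have h := hlip.dist_le_mul (x + t • v) x
      rw [Real.coe_toNNReal _ hL.le] at h
      have hd : dist (x + t • v) x = t * ‖v‖ := by
        rw [dist_eq_norm]
        simp [norm_smul, abs_of_nonneg ht.1]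
      calc ‖gradient f (x + t • v) - gradient f x‖
          = dist (gradient f (x + t • v)) (gradient f x) := (dist_eq_norm _ _).symm
        _ ≤ L * dist (x + t • v) x := h
        _ = L * (t * ‖v‖) := by rw [hd]
    have h3 : ⟪gradient f (x + t • v) - gradient f x, v⟫ ≤ L * t * ‖v‖ ^ 2 := by
      calc ⟪gradient f (x + t • v) - gradient f x, v⟫
          ≤ ‖gradient f (x + t • v) - gradient f x‖ * ‖v‖ := real_inner_le_norm _ _
        _ ≤ L * (t * ‖v‖) * ‖v‖ := by
            apply mul_le_mul_of_nonneg_right h2 (norm_nonneg _)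
        _ = L * t * ‖v‖ ^ 2 := by ring
    linarith [h1, h3]
  have hmono : (∫ t in (0:ℝ)..1, ⟪gradient f (x + t • v), v⟫)
      ≤ ∫ t in (0:ℝ)..1, (⟪gradient f x, v⟫ + L * t * ‖v‖ ^ 2) := by
    apply intervalIntegral.integral_mono_on zero_le_one (hcont.intervalIntegrable 0 1)
      ((by fun_prop : Continuous fun t : ℝ => ⟪gradient f x, v⟫ + L * t * ‖v‖ ^ 2).intervalIntegrable 0 1)
    exact hbound
  have hval : (∫ t in (0:ℝ)..1, (⟪gradient f x, v⟫ + L * t * ‖v‖ ^ 2))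
      = ⟪gradient f x, v⟫ + L / 2 * ‖v‖ ^ 2 := by
    rw [intervalIntegral.integral_add (intervalIntegrable_const)
      ((by fun_prop : Continuous fun t : ℝ => L * t * ‖v‖ ^ 2).intervalIntegrable 0 1)]
    simp only [intervalIntegral.integral_const, smul_eq_mul]
    have h5 : (∫ t in (0:ℝ)..1, L * t * ‖v‖ ^ 2) = L / 2 * ‖v‖ ^ 2 := by
      simp only [show ∀ t : ℝ, L * t * ‖v‖ ^ 2 = (L * ‖v‖ ^ 2) * t from fun t => by ring]
      rw [intervalIntegral.integral_const_mul, integral_id]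
      ring
    rw [h5]; ring
  linarith [hint, hmono, hval]

theorem stmt_16 {d : ℕ} (f : EuclideanSpace ℝ (Fin d) → ℝ) (L c m : ℝ)
    (hL : 0 < L) (hc : 0 < c)
    (hdiff : Differentiable ℝ f)
    (hlip : LipschitzWith (Real.toNNReal L) (gradient f))
    (hlow : ∀ x, m ≤ f x) (hatt : ∃ x, f x = m)
    (hPL : ∀ x, ‖gradient f x‖ ^ 2 ≥ c * (f x - m))
    (w : ℕ → EuclideanSpace ℝ (Fin d))
    (hrec : ∀ n, w (n + 1) = w n - (1 / L) • gradient f (w n)) :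
    ∀ n : ℕ, f (w n) - m ≤ (1 - c / (2 * L)) ^ n * (f (w 0) - m) := by
  have key : ∀ x, f (x - (1/L) • gradient f x) ≤ f x - 1/(2*L) * ‖gradient f x‖^2 := by
    intro x
    have h := descent f L hL hdiff hlip x (x - (1/L) • gradient f x)
    have hvx : (x - (1/L) • gradient f x) - x = -((1/L) • gradient f x) := by abel
    rw [hvx] at h
    have h1 : ⟪gradient f x, -((1/L) • gradient f x)⟫ = -(1/L * ‖gradient f x‖^2) := by
      rw [inner_neg_right, real_inner_smul_right, real_inner_self_eq_norm_sq]
    have h2 : ‖-((1/L) • gradient f x)‖^2 = (1/L)^2 * ‖gradient f x‖^2 := by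
      rw [norm_neg, norm_smul, mul_pow, Real.norm_eq_abs, sq_abs]
    rw [h1, h2] at h
    have h3 : L/2 * ((1/L)^2 * ‖gradient f x‖^2) = 1/(2*L) * ‖gradient f x‖^2 := by
      field_simp
    have h4 : 1/L * ‖gradient f x‖^2 = 2 * (1/(2*L) * ‖gradient f x‖^2) := by
      field_simp
    linarith
  have hstep : ∀ n, f (w (n+1)) - m ≤ (1 - c/(2*L)) * (f (w n) - m) := by
    intro n
    have h := key (w n)
    rw [← hrec n] at h
    have hpl := hPL (w n)
    have hpos : (0:ℝ) < 1/(2*L) := by positivity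
    have : 1/(2*L) * (c * (f (w n) - m)) ≤ 1/(2*L) * ‖gradient f (w n)‖^2 :=
      mul_le_mul_of_nonneg_left hpl hpos.le
    have hgoal : f (w (n+1)) ≤ f (w n) - 1/(2*L) * (c * (f (w n) - m)) := by linarith
    have : 1/(2*L) * (c * (f (w n) - m)) = c/(2*L) * (f (w n) - m) := by ring
    linarith [hgoal, this.ge]
  have hnn : ∀ x, (0:ℝ) ≤ (1 - c/(2*L)) * (f x - m) := by
    intro x
    have h := key x
    have hpl := hPL x
    have hlo := hlow (x - (1/L) • gradient f x)
    have hpos : (0:ℝ) < 1/(2*L) := by positivity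
    have : 1/(2*L) * (c * (f x - m)) ≤ 1/(2*L) * ‖gradient f x‖^2 :=
      mul_le_mul_of_nonneg_left hpl hpos.le
    have : m ≤ f x - 1/(2*L) * (c * (f x - m)) := by linarith
    have heq : f x - 1/(2*L) * (c * (f x - m)) - m
        = (1 - c/(2*L)) * (f x - m) - (f x - m) * (c/(2*L)) + (f x - m) * (c/(2*L)) - 0 := by
      ring
    nlinarith [this]
  by_cases h0 : f (w 0) = m
  · have hall : ∀ n, f (w n) = m := by
      intro n
      induction n with
      | zero => exact h0
      | succ k ih =>
        have h := hstep k
        rw [ih] at h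
        simp at h
        exact le_antisymm h (hlow _)
    intro n
    rw [hall n, h0]
    simp
  · have hgt : m < f (w 0) := lt_of_le_of_ne (hlow _) (fun h => h0 h.symm)
    have hr : (0:ℝ) ≤ 1 - c/(2*L) := by
      have := hnn (w 0)
      by_contra hneg
      push_neg at hneg
      nlinarith
    intro n
    induction n with
    | zero => simp
    | succ k ih =>
      calc f (w (k+1)) - m ≤ (1 - c/(2*L)) * (f (w k) - m) := hstep k
        _ ≤ (1 - c/(2*L)) * ((1 - c/(2*L))^k * (f (w 0) - m)) :=
            mul_le_mul_of_nonneg_left ih hr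
        _ = (1 - c/(2*L))^(k+1) * (f (w 0) - m) := by ring
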